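/- arXiv:1701.03723 — 3 statements merged into one kernel-verified Lean document; each statement's English description precedes it below -/
import Mathlib

section
/- Let r ≥ 0, m ≥ 1, n ≥ 1 be integers and let a_1, a_2, … be complex numbers. Then Σ_{1 ≤ k_m ≤ ⋯ ≤ k_1 ≤ n} a_{k_1+r} a_{k_2+r} ⋯ a_{k_m+r} = Σ_{i+j=m, i,j ≥ 0} (−1)^i · Ā_i(r) · A_j(n+r), where Ā_q(N) = Σ_{1 ≤ k_q < ⋯ < k_1 ≤ N} a_{k_1}⋯a_{k_q} and A_q(N) = Σ_{1 ≤ k_q ≤ ⋯ ≤ k_1 ≤ N} a_{k_1}⋯a_{k_q}. -/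
open Finset

/-- Multiple harmonic number `ζ_n({1}_m)`:
`ζ_n({1}_m) = ∑_{n ≥ n₁ > n₂ > ⋯ > n_m ≥ 1} 1/(n₁ ⋯ n_m)`, with `ζ_n({1}_0) = 1`. -/
noncomputable def mhn : ℕ → ℕ → ℝ
  | _, 0 => 1
  | n, m + 1 => ∑ k ∈ Finset.Icc 1 n, mhn (k - 1) m / (k : ℝ)

/-- Multiple harmonic star number `ζ_n^⋆({1}_m)`:
`ζ_n^⋆({1}_m) = ∑_{n ≥ n₁ ≥ n₂ ≥ ⋯ ≥ n_m ≥ 1} 1/(n₁ ⋯ n_m)`, with `ζ_n^⋆({1}_0) = 1`. -/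
noncomputable def mhsn : ℕ → ℕ → ℝ
  | _, 0 => 1
  | n, m + 1 => ∑ k ∈ Finset.Icc 1 n, mhsn k m / (k : ℝ)

/-- Multiple harmonic number with repeated real argument `p`: `ζ_n({p}_m)`. -/
noncomputable def mhnP (p : ℝ) : ℕ → ℕ → ℝ
  | _, 0 => 1
  | n, m + 1 => ∑ k ∈ Finset.Icc 1 n, mhnP p (k - 1) m / (k : ℝ) ^ p

/-- Multiple harmonic star number with repeated real argument `p`: `ζ_n^⋆({p}_m)`. -/
noncomputable def mhsnP (p : ℝ) : ℕ → ℕ → ℝ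
  | _, 0 => 1
  | n, m + 1 => ∑ k ∈ Finset.Icc 1 n, mhsnP p k m / (k : ℝ) ^ p

/-- Generalized harmonic number `H_n^{(p)} = ∑_{j=1}^n 1/j^p`. -/
noncomputable def genH (p n : ℕ) : ℝ := ∑ j ∈ Finset.Icc 1 n, 1 / (j : ℝ) ^ p

/-- Auxiliary: `hypAux m n k = h_n^{(m+1)}(k)` for `k ≥ 1` (peel off the weak outer indices). -/
noncomputable def hypAux : ℕ → ℕ → ℕ → ℝ
  | 0, n, k => mhn n k
  | m + 1, n, k => ∑ j ∈ Finset.Icc 1 n, hypAux m j k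

/-- Generalized hyperharmonic number `h_n^{(m)}(k)`, with the convention
`h_n^{(m)}(0) = C(m+n-1, m-1)`. -/
noncomputable def gh (n m k : ℕ) : ℝ :=
  if k = 0 then (Nat.choose (m + n - 1) (m - 1) : ℝ) else hypAux (m - 1) n k

/-- Unsigned Stirling number of the first kind, defined by the standard recurrence,
equivalently by `x(x+1)⋯(x+n-1) = ∑_{k=0}^n [n; k] xᵏ`. -/
def stir1 : ℕ → ℕ → ℕ
  | 0, 0 => 1
  | 0, _ + 1 => 0
  | _ + 1, 0 => 0
  | n + 1, k + 1 => stir1 n k + n * stir1 n (k + 1)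

/-- Multiple zeta value `ζ(p, {1}_m)`. -/
noncomputable def mzv (p m : ℕ) : ℝ := ∑' n : ℕ, mhn n m / (n + 1 : ℝ) ^ p

/-- Multiple zeta star value `ζ^⋆(p, {1}_m)`. -/
noncomputable def mzvStar (p m : ℕ) : ℝ := ∑' n : ℕ, mhsn (n + 1) m / (n + 1 : ℝ) ^ p

/-- Riemann zeta value `ζ(p) = ∑_{n=1}^∞ 1/n^p`. -/
noncomputable def rz (p : ℕ) : ℝ := ∑' n : ℕ, 1 / (n + 1 : ℝ) ^ p

/-- `U_{m,r}(p) = ∑_{n=1}^∞ ζ_{n+r}({1}_m)/n^p`. -/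
noncomputable def Usum (m r p : ℕ) : ℝ := ∑' n : ℕ, mhn (n + 1 + r) m / (n + 1 : ℝ) ^ p

/-- Strictly decreasing `q`-fold sum `Ā_q(n) = ∑_{1 ≤ k_q < ⋯ < k₁ ≤ n} a_{k₁}⋯a_{k_q}`,
with `Ā_0(n) = 1` (so `Ā_q(n) = 0` when `n < q`). -/
def sdSum {R : Type*} [Semiring R] (a : ℕ → R) : ℕ → ℕ → R
  | _, 0 => 1
  | n, q + 1 => ∑ k ∈ Finset.Icc 1 n, a k * sdSum a (k - 1) q

/-- Weakly decreasing `q`-fold sum `A_q(n) = ∑_{1 ≤ k_q ≤ ⋯ ≤ k₁ ≤ n} a_{k₁}⋯a_{k_q}`,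
with `A_0(n) = 1`. -/
def wdSum {R : Type*} [Semiring R] (a : ℕ → R) : ℕ → ℕ → R
  | _, 0 => 1
  | n, q + 1 => ∑ k ∈ Finset.Icc 1 n, a k * wdSum a k q

lemma sdSum_zero {R : Type*} [Semiring R] (a : ℕ → R) (n : ℕ) : sdSum a n 0 = 1 := rfl
lemma wdSum_zero {R : Type*} [Semiring R] (a : ℕ → R) (n : ℕ) : wdSum a n 0 = 1 := rfl
lemma sdSum_succ {R : Type*} [Semiring R] (a : ℕ → R) (n q : ℕ) :
    sdSum a n (q+1) = ∑ k ∈ Finset.Icc 1 n, a k * sdSum a (k - 1) q := rfl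
lemma wdSum_succ {R : Type*} [Semiring R] (a : ℕ → R) (n q : ℕ) :
    wdSum a n (q+1) = ∑ k ∈ Finset.Icc 1 n, a k * wdSum a k q := rfl

lemma sdSum_top {R : Type*} [Semiring R] (a : ℕ → R) (n q : ℕ) :
    sdSum a (n+1) (q+1) = sdSum a n (q+1) + a (n+1) * sdSum a n q := by
  rw [sdSum_succ, sdSum_succ, Finset.sum_Icc_succ_top (Nat.le_add_left 1 n)]
  simp

lemma wdSum_top {R : Type*} [Semiring R] (a : ℕ → R) (n q : ℕ) :
    wdSum a (n+1) (q+1) = wdSum a n (q+1) + a (n+1) * wdSum a (n+1) q := by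
  rw [wdSum_succ, wdSum_succ, Finset.sum_Icc_succ_top (Nat.le_add_left 1 n)]

lemma sdSum_eq_wdSum_one {R : Type*} [Semiring R] (a : ℕ → R) (n : ℕ) :
    sdSum a n 1 = wdSum a n 1 := by
  rw [sdSum_succ, wdSum_succ]
  exact Finset.sum_congr rfl (fun k _ => rfl)

lemma orth {R : Type*} [CommRing R] (a : ℕ → R) :
    ∀ N s, ∑ i ∈ range (s+2), (-1:R)^i * sdSum a N i * wdSum a N (s+1-i) = 0 := by
  intro N
  induction N with
  | zero =>
    intro s
    apply Finset.sum_eq_zero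
    intro i hi
    match i with
    | 0 => simp [wdSum_succ]
    | i + 1 => simp [sdSum_succ]
  | succ N ihN =>
    intro s
    induction s with
    | zero =>
      have : wdSum a (N+1) 1 = sdSum a (N+1) 1 := (sdSum_eq_wdSum_one a (N+1)).symm
      simp [Finset.sum_range_succ]
      simp [this, sdSum_zero, wdSum_zero]
    | succ s ihs =>
      have key : ∀ i ∈ range (s+2),
          (-1:R)^i * sdSum a (N+1) i * wdSum a (N+1) (s+2-i)
          = (-1:R)^i * sdSum a (N+1) i * wdSum a N (s+2-i)
            + a (N+1) * ((-1:R)^i * sdSum a (N+1) i * wdSum a (N+1) (s+1-i)) := by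
        intro i hi
        simp only [Finset.mem_range] at hi
        have h1 : s + 2 - i = (s + 1 - i) + 1 := by omega
        rw [h1, wdSum_top]
        ring
      rw [Finset.sum_range_succ, Finset.sum_congr rfl key, Finset.sum_add_distrib,
        ← Finset.mul_sum, ihs, mul_zero, add_zero]
      -- now goal: ∑ i ∈ range (s+2), (-1)^i e'(i) h(s+2-i) + (-1)^(s+2) e'(s+2) h'(0) = 0
      have h0 : wdSum a (N+1) (s+2-(s+2)) = wdSum a N (s+2-(s+2)) := by
        simp [wdSum_zero]
      rw [h0, ← Finset.sum_range_succ (fun i => (-1:R)^i * sdSum a (N+1) i * wdSum a N (s+2-i))]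
      -- C = ∑ i ∈ range (s+3), (-1)^i e'(i) h(s+2-i)
      rw [Finset.sum_range_succ']
      have key2 : ∀ i ∈ range (s+2),
          (-1:R)^(i+1) * sdSum a (N+1) (i+1) * wdSum a N (s+2-(i+1))
          = (-1:R)^(i+1) * sdSum a N (i+1) * wdSum a N (s+1-i)
            + (-(a (N+1))) * ((-1:R)^i * sdSum a N i * wdSum a N (s+1-i)) := by
        intro i hi
        have h1 : s + 2 - (i+1) = s + 1 - i := by omega
        rw [h1, sdSum_top]
        ring
      rw [Finset.sum_congr rfl key2, Finset.sum_add_distrib, ← Finset.mul_sum, ihN s, mul_zero,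
        add_zero]
      have := ihN (s+1)
      rw [Finset.sum_range_succ'] at this
      simpa [sdSum_zero] using this

lemma wdSum_split {R : Type*} [CommRing R] (a : ℕ → R) (r : ℕ) :
    ∀ j n, wdSum a (n + r) j
      = ∑ t ∈ range (j+1), wdSum a r t * wdSum (fun k => a (k + r)) n (j - t) := by
  intro j
  induction j with
  | zero => intro n; simp [wdSum_zero]
  | succ j ih =>
    intro n
    have hIcc : ∀ m : ℕ, Finset.Icc 1 m = Finset.Ioc 0 m := fun m => by
      rw [← Finset.Icc_add_one_left_eq_Ioc]
      rfl
    rw [wdSum_succ, hIcc, ← Finset.sum_Ioc_consecutive _ (Nat.zero_le r) (Nat.le_add_left r n)]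
    have hmap : ∑ k ∈ Finset.Ioc r (n + r), a k * wdSum a k j
        = ∑ k ∈ Finset.Ioc 0 n, a (k + r) * wdSum a (k + r) j := by
      rw [show Finset.Ioc r (n + r) = Finset.Ioc (0 + r) (n + r) by rw [Nat.zero_add],
        ← Finset.map_add_right_Ioc, Finset.sum_map]
      rfl
    rw [hmap]
    have hfirst : ∑ k ∈ Finset.Ioc 0 r, a k * wdSum a k j = wdSum a r (j+1) := by
      rw [wdSum_succ, hIcc]
    rw [hfirst]
    have hsecond : ∑ k ∈ Finset.Ioc 0 n, a (k + r) * wdSum a (k + r) j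
        = ∑ t ∈ range (j+1), wdSum a r t * wdSum (fun k => a (k + r)) n ((j - t) + 1) := by
      have : ∀ k ∈ Finset.Ioc 0 n, a (k + r) * wdSum a (k + r) j
          = ∑ t ∈ range (j+1), wdSum a r t * (a (k + r) * wdSum (fun k => a (k + r)) k (j - t)) := by
        intro k _
        rw [ih k, Finset.mul_sum]
        exact Finset.sum_congr rfl fun t _ => by ring
      rw [Finset.sum_congr rfl this, Finset.sum_comm]
      refine Finset.sum_congr rfl fun t _ => ?_
      rw [← Finset.mul_sum, wdSum_succ, hIcc]
    rw [hsecond]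
    have h1 : ∀ t ∈ range (j+1), wdSum a r t * wdSum (fun k => a (k + r)) n ((j - t) + 1)
        = wdSum a r t * wdSum (fun k => a (k + r)) n (j + 1 - t) := by
      intro t ht
      simp only [Finset.mem_range] at ht
      congr 2
      omega
    rw [Finset.sum_congr rfl h1,
      Finset.sum_range_succ (fun t => wdSum a r t * wdSum (fun k => a (k + r)) n (j + 1 - t)) (j+1)]
    simp [wdSum_zero]
    ring


/-- Remark 2.1, weak version: for `r ≥ 0`, `m, n ≥ 1`,
`∑_{1 ≤ k_m ≤ ⋯ ≤ k₁ ≤ n} a_{k₁+r}⋯a_{k_m+r} = ∑_{i+j=m} (-1)^i Ā_i(r) A_j(n+r)`. -/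
theorem shifted_wdSum_eq (r m n : ℕ) (hm : 1 ≤ m) (hn : 1 ≤ n) (a : ℕ → ℂ) :
    wdSum (fun k => a (k + r)) n m =
      ∑ i ∈ Finset.range (m + 1), (-1 : ℂ) ^ i * sdSum a r i * wdSum a (n + r) (m - i) := by
  have step1 : ∀ i ∈ range (m+1), (-1 : ℂ) ^ i * sdSum a r i * wdSum a (n + r) (m - i)
      = ∑ t ∈ range (m + 1 - i),
          (-1 : ℂ) ^ i * sdSum a r i * wdSum a r t * wdSum (fun k => a (k + r)) n (m - i - t) := by
    intro i hi
    simp only [Finset.mem_range] at hi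
    rw [wdSum_split a r (m - i) n, Finset.mul_sum]
    have : m - i + 1 = m + 1 - i := by omega
    rw [this]
    exact Finset.sum_congr rfl fun t _ => by ring
  rw [Finset.sum_congr rfl step1,
    ← Finset.sum_range_diag_flip (m+1)
      (fun i t => (-1 : ℂ) ^ i * sdSum a r i * wdSum a r t * wdSum (fun k => a (k + r)) n (m - i - t))]
  have step2 : ∀ s ∈ range (m+1), (∑ i ∈ range (s+1),
        (-1 : ℂ) ^ i * sdSum a r i * wdSum a r (s - i) * wdSum (fun k => a (k + r)) n (m - i - (s - i)))
      = (∑ i ∈ range (s+1), (-1 : ℂ) ^ i * sdSum a r i * wdSum a r (s - i))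
          * wdSum (fun k => a (k + r)) n (m - s) := by
    intro s hs
    simp only [Finset.mem_range] at hs
    rw [Finset.sum_mul]
    refine Finset.sum_congr rfl fun i hi => ?_
    simp only [Finset.mem_range] at hi
    have : m - i - (s - i) = m - s := by omega
    rw [this]
  rw [Finset.sum_congr rfl step2, Finset.sum_range_succ']
  have step3 : ∀ s ∈ range m, (∑ i ∈ range (s+1+1),
        (-1 : ℂ) ^ i * sdSum a r i * wdSum a r (s+1 - i)) * wdSum (fun k => a (k + r)) n (m - (s+1))
      = 0 := by
    intro s _
    rw [orth a r s, zero_mul]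
  rw [Finset.sum_congr rfl step3, Finset.sum_const_zero, zero_add]
  simp [sdSum_zero, wdSum_zero]
end

section
/- For integers r ≥ 0, m ≥ 1 and n ≥ 1, the generalized hyperharmonic number satisfies h_n^{(r+1)}(m) = C(n+r, r) · Σ_{i+j=m, i,j ≥ 0} (−1)^i · ζ_r^⋆({1}_i) · ζ_{n+r}({1}_j), where C(n+r, r) is the binomial coefficient. -/
open Finset

noncomputable def Taux (s N m : ℕ) : ℝ :=
  ∑ i ∈ Finset.range (m + 1), (-1 : ℝ) ^ i * mhsn s i * mhn N (m - i)

lemma mhn_zero (m : ℕ) : mhn 0 (m + 1) = 0 := by simp [mhn]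
lemma mhsn_zero (m : ℕ) : mhsn 0 (m + 1) = 0 := by simp [mhsn]

lemma mhn_succ (n m : ℕ) : mhn (n + 1) (m + 1) = mhn n (m + 1) + mhn n m / (n + 1) := by
  rw [mhn, mhn, Finset.sum_Icc_succ_top (by omega)]
  push_cast
  simp

lemma mhsn_succ (n m : ℕ) : mhsn (n + 1) (m + 1) = mhsn n (m + 1) + mhsn (n + 1) m / (n + 1) := by
  rw [mhsn, mhsn, Finset.sum_Icc_succ_top (by omega)]
  push_cast
  simp

lemma Taux_zero (s N : ℕ) : Taux s N 0 = 1 := by simp [Taux, mhsn, mhn]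

lemma Taux_mhn (s N m : ℕ) :
    Taux s (N + 1) (m + 1) = Taux s N (m + 1) + Taux s N m / (N + 1) := by
  have key : ∑ x ∈ Finset.range (m + 1), (-1 : ℝ) ^ x * mhsn s x * mhn (N + 1) (m + 1 - x)
      = ∑ x ∈ Finset.range (m + 1), ((-1 : ℝ) ^ x * mhsn s x * mhn N (m + 1 - x)
          + ((-1 : ℝ) ^ x * mhsn s x * mhn N (m - x)) / (↑N + 1)) := by
    apply Finset.sum_congr rfl
    intro i hi
    rw [Finset.mem_range] at hi
    have h1 : m + 1 - i = (m - i) + 1 := by omega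
    rw [h1, mhn_succ]
    ring
  rw [Taux, Taux, Taux, Finset.sum_range_succ, Finset.sum_range_succ (n := m + 1), key,
    Finset.sum_add_distrib, ← Finset.sum_div]
  simp [mhn]
  ring

lemma Taux_mhsn (s N m : ℕ) :
    Taux (s + 1) N (m + 1) = Taux s N (m + 1) - Taux (s + 1) N m / (s + 1) := by
  have key : ∑ k ∈ Finset.range (m + 1),
        (-1 : ℝ) ^ (k + 1) * mhsn (s + 1) (k + 1) * mhn N (m + 1 - (k + 1))
      = ∑ k ∈ Finset.range (m + 1), ((-1 : ℝ) ^ (k + 1) * mhsn s (k + 1) * mhn N (m + 1 - (k + 1))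
          - ((-1 : ℝ) ^ k * mhsn (s + 1) k * mhn N (m - k)) / (↑s + 1)) := by
    apply Finset.sum_congr rfl
    intro k hk
    have h1 : m + 1 - (k + 1) = m - k := by omega
    rw [mhsn_succ, h1]
    ring
  rw [Taux, Taux, Taux, Finset.sum_range_succ' _ (m + 1), Finset.sum_range_succ' _ (m + 1), key,
    Finset.sum_sub_distrib, ← Finset.sum_div]
  simp [mhsn]
  ring

lemma Taux_diag (m n : ℕ) : Taux n n (m + 1) = 0 := by
  induction m generalizing n with
  | zero =>
    induction n with
    | zero => simp [Taux, Finset.sum_range_succ, mhn_zero, mhsn_zero]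
    | succ n ih =>
      rw [Taux_mhsn, Taux_mhn, Taux_zero, Taux_zero, ih]
      push_cast
      ring
  | succ m ihm =>
    induction n with
    | zero =>
      rw [Taux]
      apply Finset.sum_eq_zero
      intro i hi
      match i with
      | 0 => simp [mhn_zero]
      | j + 1 => simp [mhsn_zero]
    | succ n ihn =>
      rw [Taux_mhsn, Taux_mhn, ihn, ihm, ihm]
      ring

lemma Taux_step (N r m : ℕ) :
    (Nat.choose (N + 1) (r + 1) : ℝ) * Taux (r + 1) (N + 1) (m + 1)
      = (Nat.choose N (r + 1) : ℝ) * Taux (r + 1) N (m + 1)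
        + (Nat.choose N r : ℝ) * Taux r N (m + 1) := by
  have h1 : (Nat.choose (N + 1) (r + 1) : ℝ) = Nat.choose N r + Nat.choose N (r + 1) := by
    rw [Nat.choose_succ_succ]
    push_cast
    ring
  have h2 : ((N : ℝ) + 1) * (Nat.choose N r : ℝ)
      = (Nat.choose (N + 1) (r + 1) : ℝ) * ((r : ℝ) + 1) := by
    exact_mod_cast congrArg (Nat.cast (R := ℝ)) (Nat.add_one_mul_choose_eq N r)
  have hN : ((N : ℝ) + 1) ≠ 0 := by positivity
  have hr : ((r : ℝ) + 1) ≠ 0 := by positivity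
  rw [Taux_mhn, Taux_mhsn r N m]
  have h3 : (Nat.choose (N + 1) (r + 1) : ℝ) * (Taux (r + 1) N m / ((N : ℝ) + 1))
      = (Nat.choose N r : ℝ) * (Taux (r + 1) N m / ((r : ℝ) + 1)) := by
    rw [mul_div_assoc', mul_div_assoc', div_eq_div_iff hN hr]
    linear_combination - Taux (r + 1) N m * h2
  linear_combination (Taux r N (m + 1) - Taux (r + 1) N m / ((r : ℝ) + 1)) * h1 + h3

lemma main_aux (m r : ℕ) : ∀ n, hypAux r n (m + 1)
    = (Nat.choose (n + r) r : ℝ) * Taux r (n + r) (m + 1) := by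
  induction r with
  | zero =>
    intro n
    rw [hypAux, Taux, Finset.sum_range_succ' _ (m + 1)]
    simp [mhsn_zero, mhsn]
  | succ r ih =>
    intro n
    induction n with
    | zero =>
      rw [hypAux]
      simp [Taux_diag]
    | succ n ihn =>
      rw [hypAux, Finset.sum_Icc_succ_top (by omega), ← hypAux, ihn, ih (n + 1)]
      have e1 : n + 1 + (r + 1) = (n + r + 1) + 1 := by omega
      have e2 : n + 1 + r = n + r + 1 := by omega
      have e3 : n + (r + 1) = n + r + 1 := by omega
      rw [e1, e2, e3, Taux_step (n + r + 1) r m]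

/-- Theorem 2.9: for `r ≥ 0`, `m, n ≥ 1`,
`h_n^{(r+1)}(m) = C(n+r, r) ∑_{i+j=m} (-1)^i ζ_r^⋆({1}_i) ζ_{n+r}({1}_j)`. -/
theorem gh_eq_binom_mul_sum (r m n : ℕ) (hm : 1 ≤ m) (hn : 1 ≤ n) :
    gh n (r + 1) m =
      (Nat.choose (n + r) r : ℝ) *
        ∑ i ∈ Finset.range (m + 1), (-1 : ℝ) ^ i * mhsn r i * mhn (n + r) (m - i) := by
  obtain ⟨m', rfl⟩ : ∃ m', m = m' + 1 := ⟨m - 1, by omega⟩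
  rw [gh, if_neg (by omega)]
  simpa [Taux] using main_aux m' r n
end

section
/- For integers r ≥ 0, m ≥ 1 and n ≥ 1, the generalized hyperharmonic number satisfies h_n^{(r+1)}(m) = C(n+r, r) · Σ_{1 ≤ k_m < ⋯ < k_1 ≤ n} 1/((k_1 + r)(k_2 + r)⋯(k_m + r)), where C(n+r, r) is the binomial coefficient. -/
open Finset

section Aux

lemma sdSum_zero_pos (a : ℕ → ℝ) (m : ℕ) : sdSum a 0 (m + 1) = 0 := by
  show ∑ k ∈ Finset.Icc 1 0, a k * sdSum a (k - 1) m = 0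
  simp

lemma sdSum_succ_top (a : ℕ → ℝ) (n m : ℕ) :
    sdSum a (n + 1) (m + 1) = sdSum a n (m + 1) + a (n + 1) * sdSum a n m := by
  show ∑ k ∈ Finset.Icc 1 (n + 1), a k * sdSum a (k - 1) m = _
  rw [Finset.sum_Icc_succ_top (by omega)]
  rfl

lemma sdSum_shift (a : ℕ → ℝ) :
    ∀ n m, sdSum a (n + 1) (m + 1) =
      sdSum (fun k => a (k + 1)) n (m + 1) + a 1 * sdSum (fun k => a (k + 1)) n m := by
  intro n
  induction n with
  | zero =>
    intro m
    rw [sdSum_succ_top]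
    cases m with
    | zero => simp [sdSum, sdSum_zero_pos]
    | succ m => simp [sdSum_zero_pos]
  | succ n ih =>
    intro m
    cases m with
    | zero =>
      rw [sdSum_succ_top a (n + 1) 0, ih 0, sdSum_succ_top (fun k => a (k + 1)) n 0]
      have h0 : sdSum a (n + 1) 0 = 1 := rfl
      have h1 : ∀ j, sdSum (fun k => a (k + 1)) j 0 = 1 := fun _ => rfl
      rw [h0, h1, h1]
      ring
    | succ m =>
      rw [sdSum_succ_top a (n + 1) (m + 1), ih (m + 1), ih m,
        sdSum_succ_top (fun k => a (k + 1)) n (m + 1),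
        sdSum_succ_top (fun k => a (k + 1)) n m]
      ring

lemma mhn_eq_sdSum : ∀ m n, mhn n m = sdSum (fun k => 1 / (k : ℝ)) n m := by
  intro m
  induction m with
  | zero => intro n; rfl
  | succ m ih =>
    intro n
    show ∑ k ∈ Finset.Icc 1 n, mhn (k - 1) m / (k : ℝ) = ∑ k ∈ Finset.Icc 1 n, _
    refine Finset.sum_congr rfl fun k _ => ?_
    rw [ih]
    ring

lemma key (r : ℕ) : ∀ n m, hypAux r n (m + 1) =
    (Nat.choose (n + r) r : ℝ) * sdSum (fun k => 1 / ((k : ℝ) + r)) n (m + 1) := by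
  induction r with
  | zero =>
    intro n m
    show mhn n (m + 1) = _
    rw [mhn_eq_sdSum]
    simp
  | succ r ih =>
    intro n m
    show ∑ j ∈ Finset.Icc 1 n, hypAux r j (m + 1) = _
    have hfun : (fun k : ℕ => 1 / (((k + 1 : ℕ) : ℝ) + r)) =
        (fun k : ℕ => 1 / ((k : ℝ) + (r + 1 : ℕ))) := by
      funext k; push_cast; ring_nf
    induction n with
    | zero => simp [sdSum_zero_pos]
    | succ n ihn =>
      rw [Finset.sum_Icc_succ_top (by omega), ihn, ih (n + 1) m, sdSum_shift, hfun,
        sdSum_succ_top]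
      have hp : (((n + 1) + (r + 1)).choose (r + 1) : ℝ) =
          ((n + (r + 1)).choose (r + 1) : ℝ) + ((n + 1 + r).choose r : ℝ) := by
        push_cast [show (n + 1) + (r + 1) = (n + 1 + r) + 1 by ring, Nat.choose_succ_succ',
          show n + (r + 1) = n + 1 + r by ring]
        ring
      have hmul : ((n : ℝ) + 1 + (r + 1)) * ((n + 1 + r).choose r : ℝ) =
          (((n + 1) + (r + 1)).choose (r + 1) : ℝ) * ((r : ℝ) + 1) := by
        have h2 : ((Nat.succ (n + 1 + r) * (n + 1 + r).choose r : ℕ) : ℝ)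
            = (((n + 1 + r + 1).choose (r + 1) * (r + 1) : ℕ) : ℝ) := by
          rw [Nat.add_one_mul_choose_eq (n + 1 + r) r]
        rw [show (n + 1) + (r + 1) = n + 1 + r + 1 by ring]
        push_cast at h2 ⊢
        linarith [h2]
      set S := sdSum (fun k => 1 / ((k : ℝ) + ((r : ℕ) + 1 : ℕ))) n (m + 1) with hS
      set T := sdSum (fun k => 1 / ((k : ℝ) + ((r : ℕ) + 1 : ℕ))) n m with hT
      push_cast at hp hmul ⊢
      have h1 : (1 : ℝ) + r ≠ 0 := by positivity
      have h2 : (n : ℝ) + 1 + ((r : ℝ) + 1) ≠ 0 := by positivity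
      field_simp
      linear_combination (-((1 + (r : ℝ)) * ((n : ℝ) + 1 + ((r : ℝ) + 1)) * S)) * hp + T * hmul

end Aux

/-- formula (2.16): for `r ≥ 0`, `m, n ≥ 1`,
`h_n^{(r+1)}(m) = C(n+r, r) ∑_{1 ≤ k_m < ⋯ < k₁ ≤ n} 1/((k₁+r)⋯(k_m+r))`. -/
theorem gh_eq_binom_mul_shifted_mhn (r m n : ℕ) (hm : 1 ≤ m) (hn : 1 ≤ n) :
    gh n (r + 1) m =
      (Nat.choose (n + r) r : ℝ) * sdSum (fun k => 1 / ((k : ℝ) + r)) n m := by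
  obtain ⟨m', rfl⟩ : ∃ m', m = m' + 1 := ⟨m - 1, by omega⟩
  show (if m' + 1 = 0 then ((Nat.choose (r + 1 + n - 1) (r + 1 - 1)) : ℝ)
      else hypAux (r + 1 - 1) n (m' + 1)) = _
  rw [if_neg (Nat.succ_ne_zero m')]
  exact key r n m'
end
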